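/- For every α > 1/2, the α-th power of the Jensen-Shannon divergence is not a metric on the open probability simplex 𝒫_n = {(p_1,...,p_n) : p_i > 0, Σ p_i = 1} for any n ≥ 2; specifically, there exist P, Q, R ∈ 𝒫_n with D_JS(P:R)^α > D_JS(P:Q)^α + D_JS(Q:R)^α. -/

import Mathlib

noncomputable def gfun (x : ℝ) : ℝ := (1+x)*Real.log (1+x) + (1-x)*Real.log (1-x)

lemma gfun_neg (x : ℝ) : gfun (-x) = gfun x := by
  unfold gfun
  rw [show (1 + -x : ℝ) = 1 - x by ring, show (1 - -x : ℝ) = 1 + x by ring]; ring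

lemma gfun_bounds (x : ℝ) (h0 : 0 ≤ x) (h1 : x ≤ 1/24) :
    x^2 ≤ gfun x ∧ gfun x ≤ x^2 + x^4 := by
  have hx1 : |x| < 1 := by rw [abs_of_nonneg h0]; linarith
  have hx1' : |(-x)| < 1 := by rwa [abs_neg]
  have h2 := Real.abs_log_sub_add_sum_range_le hx1 4
  have h3 := Real.abs_log_sub_add_sum_range_le hx1' 4
  rw [abs_of_nonneg h0] at h2
  rw [abs_neg, abs_of_nonneg h0] at h3
  simp only [Finset.sum_range_succ, Finset.sum_range_zero] at h2 h3
  norm_num at h2 h3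
  rw [abs_le] at h2 h3
  obtain ⟨h2a, h2b⟩ := h2
  obtain ⟨h3a, h3b⟩ := h3
  rw [show ((-x)^3 : ℝ) = -x^3 by ring] at h3a h3b
  have hE : x^5/(1-x) ≤ 2*x^5 := by
    rw [div_le_iff₀ (by linarith)]
    nlinarith [pow_nonneg h0 5]
  have hEn : 0 ≤ x^5/(1-x) := div_nonneg (by positivity) (by linarith)
  have l1 : Real.log (1-x) ≥ -(x + x^2/2 + x^3/3 + x^4/4) - x^5/(1-x) := by linarith
  have l2 : Real.log (1-x) ≤ -(x + x^2/2 + x^3/3 + x^4/4) + x^5/(1-x) := by linarith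
  have l3 : Real.log (1+x) ≥ (x - x^2/2 + x^3/3 - x^4/4) - x^5/(1-x) := by linarith
  have l4 : Real.log (1+x) ≤ (x - x^2/2 + x^3/3 - x^4/4) + x^5/(1-x) := by linarith
  have c1 : (0:ℝ) ≤ 1 + x := by linarith
  have c2 : (0:ℝ) ≤ 1 - x := by linarith
  constructor
  · unfold gfun
    nlinarith [mul_le_mul_of_nonneg_left l1 c2, mul_le_mul_of_nonneg_left l3 c1,
      pow_nonneg h0 4, pow_nonneg h0 5, hE]
  · unfold gfun
    nlinarith [mul_le_mul_of_nonneg_left l2 c2, mul_le_mul_of_nonneg_left l4 c1,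
      pow_nonneg h0 4, pow_nonneg h0 5, hE]

lemma term_eq (p q : ℝ) (hp : 0 < p) (hq : 0 < q) :
    -(p / 2) * Real.logb 2 ((p + q) / (2 * p)) - (q / 2) * Real.logb 2 ((p + q) / (2 * q))
      = ((p+q)/4) * gfun ((p-q)/(p+q)) / Real.log 2 := by
  have hs : (0:ℝ) < p + q := by linarith
  have h1 : (1 + (p-q)/(p+q)) = 2*p/(p+q) := by field_simp; ring
  have h2 : (1 - (p-q)/(p+q)) = 2*q/(p+q) := by field_simp; ring
  unfold gfun
  rw [h1, h2, Real.logb, Real.logb,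
    show (p+q)/(2*p) = (2*p/(p+q))⁻¹ by rw [inv_div],
    show (p+q)/(2*q) = (2*q/(p+q))⁻¹ by rw [inv_div],
    Real.log_inv, Real.log_inv]
  field_simp
  ring

lemma sum_split {n : ℕ} (hn : 2 ≤ n) (f : Fin n → ℝ) :
    ∑ i, f i = ∑ i ∈ Finset.univ \ {(⟨0, by omega⟩ : Fin n), ⟨1, by omega⟩}, f i
      + (f ⟨0, by omega⟩ + f ⟨1, by omega⟩) := by
  rw [← Finset.sum_pair (by simp [Fin.ext_iff] : (⟨0, by omega⟩ : Fin n) ≠ ⟨1, by omega⟩)]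
  exact (Finset.sum_sdiff (Finset.subset_univ _)).symm

/-- Jensen-Shannon divergence between multinomial distributions given as positive
probability vectors on `Fin n`. -/
noncomputable def jsd {n : ℕ} (P Q : Fin n → ℝ) : ℝ :=
  ∑ i, (-(P i / 2) * Real.logb 2 ((P i + Q i) / (2 * P i))
        - (Q i / 2) * Real.logb 2 ((P i + Q i) / (2 * Q i)))


lemma key_ineq (δ t c : ℝ) (hδpos : 0 < δ) (hδ24 : δ ≤ 1/24) (hδt : δ^2 ≤ t/4)
    (htpos : 0 < t) (hcval : c = 1/4 + t) :
    (2-δ)/4 * ((δ/(2-δ))^2 + (δ/(2-δ))^4)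
      + (2+δ)/4 * ((δ/(2+δ))^2 + (δ/(2+δ))^4) < c * δ^2 := by
  have d1 : (0:ℝ) < 2 - δ := by linarith
  have d2 : (0:ℝ) < 2 + δ := by linarith
  have eq1 : (2-δ)/4 * ((δ/(2-δ))^2 + (δ/(2-δ))^4)
      = δ^2/(4*(2-δ)) + δ^4/(4*(2-δ)^3) := by
    field_simp
  have eq2 : (2+δ)/4 * ((δ/(2+δ))^2 + (δ/(2+δ))^4)
      = δ^2/(4*(2+δ)) + δ^4/(4*(2+δ)^3) := by
    field_simp
  have f1 : δ^2/(4*(2-δ)) + δ^2/(4*(2+δ)) = δ^2/(4-δ^2) := by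
    rw [div_add_div _ _ (by positivity) (by positivity),
      div_eq_div_iff (by positivity) (by nlinarith)]
    ring
  have f2 : δ^2/(4-δ^2) ≤ (δ^2+δ^4)/4 := by
    rw [div_le_div_iff₀ (by nlinarith) (by norm_num)]
    have h3 : δ^4*δ^2 ≤ δ^4*3 :=
      mul_le_mul_of_nonneg_left (by nlinarith) (by positivity)
    nlinarith [h3]
  have f3 : δ^4/(4*(2-δ)^3) ≤ δ^4/4 := by
    apply div_le_div_of_nonneg_left (by positivity) (by norm_num)
    nlinarith
  have f4 : δ^4/(4*(2+δ)^3) ≤ δ^4/4 := by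
    apply div_le_div_of_nonneg_left (by positivity) (by norm_num)
    nlinarith
  have hd4 : δ^4 ≤ (t/4) * δ^2 := by nlinarith [sq_nonneg δ]
  have htδ : 0 < t * δ^2 := mul_pos htpos (pow_pos hδpos 2)
  rw [eq1, eq2, hcval]
  linarith

set_option maxHeartbeats 2000000 in
theorem jsd_pow_not_metric (n : ℕ) (hn : 2 ≤ n) (α : ℝ) (hα : 1 / 2 < α) :
    ∃ P Q R : Fin n → ℝ,
      (∀ i, 0 < P i) ∧ (∑ i, P i) = 1 ∧
      (∀ i, 0 < Q i) ∧ (∑ i, Q i) = 1 ∧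
      (∀ i, 0 < R i) ∧ (∑ i, R i) = 1 ∧
      jsd P R ^ α > jsd P Q ^ α + jsd Q R ^ α := by
  have hα0 : (0:ℝ) < α := by linarith
  -- the constant c = 2^(-1/α) > 1/4
  set c : ℝ := (2:ℝ) ^ (-α⁻¹) with hc
  have hcpos : 0 < c := Real.rpow_pos_of_pos (by norm_num) _
  have hc4 : 1/4 < c := by
    have hinv : α⁻¹ < 2 := by
      have := inv_strictAnti₀ (by norm_num : (0:ℝ) < 1/2) hα
      norm_num at this; linarith
    have h22 : (2:ℝ) ^ (-(2:ℝ)) < (2:ℝ) ^ (-α⁻¹) :=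
      (Real.rpow_lt_rpow_left_iff (by norm_num)).mpr (by linarith)
    have h14 : (2:ℝ) ^ (-(2:ℝ)) = 1/4 := by
      rw [Real.rpow_neg (by norm_num), show ((2:ℝ)) ^ (2:ℝ) = 4 by
        rw [show (2:ℝ) = ((2:ℕ):ℝ) by norm_num, Real.rpow_natCast]; norm_num]
      norm_num
    rw [← h14]; exact h22
  have hcα : c ^ α = 1/2 := by
    rw [hc, ← Real.rpow_mul (by norm_num : (0:ℝ) ≤ 2)]
    rw [show -α⁻¹ * α = -1 by field_simp, Real.rpow_neg_one]
    norm_num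
  set t : ℝ := c - 1/4 with ht
  have htpos : 0 < t := by simp [ht]; linarith
  -- choose δ
  set δ : ℝ := min (1/24) (Real.sqrt t / 2) with hδ
  have hδpos : 0 < δ := lt_min (by norm_num) (by positivity)
  have hδ24 : δ ≤ 1/24 := min_le_left _ _
  have hδt : δ^2 ≤ t/4 := by
    have h1 : δ ≤ Real.sqrt t / 2 := min_le_right _ _
    have h2 : δ^2 ≤ (Real.sqrt t / 2)^2 := by
      apply pow_le_pow_left₀ hδpos.le h1
    rw [div_pow, Real.sq_sqrt htpos.le] at h2
    linarith
  have hδ1 : δ < 1 := by linarith only [hδ24]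
  set m : ℝ := 1/(n:ℝ) with hm

  have hn0 : (0:ℝ) < n := Nat.cast_pos.mpr (by omega)
  have hmpos : 0 < m := by positivity
  set i0 : Fin n := ⟨0, by omega⟩ with hi0
  set i1 : Fin n := ⟨1, by omega⟩ with hi1
  have hi01 : i0 ≠ i1 := by simp [hi0, hi1, Fin.ext_iff]
  set P : Fin n → ℝ := fun i => if i = i0 then m*(1-δ) else if i = i1 then m*(1+δ) else m with hP
  set Q : Fin n → ℝ := fun _ => m with hQ
  set R : Fin n → ℝ := fun i => if i = i0 then m*(1+δ) else if i = i1 then m*(1-δ) else m with hR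
  have hPpos : ∀ i, 0 < P i := by
    intro i; simp only [hP]
    split_ifs <;>
      first
        | exact hmpos
        | exact mul_pos hmpos (by linarith only [hδ1, hδpos])
  have hQpos : ∀ i, 0 < Q i := fun i => hmpos
  have hRpos : ∀ i, 0 < R i := by
    intro i; simp only [hR]
    split_ifs <;>
      first
        | exact hmpos
        | exact mul_pos hmpos (by linarith only [hδ1, hδpos])
  have hcard : ((Finset.univ \ {i0, i1} : Finset (Fin n)).card : ℝ) = (n:ℝ) - 2 := by
    rw [Finset.card_sdiff_of_subset (Finset.subset_univ _), Finset.card_pair hi01, Finset.card_univ,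
      Fintype.card_fin]
    have : 2 ≤ n := hn
    push_cast [Nat.cast_sub this]
    ring
  have hsum : ∀ f : Fin n → ℝ, (∀ i, i ≠ i0 → i ≠ i1 → f i = m) →
      f i0 + f i1 = 2*m → ∑ i, f i = 1 := by
    intro f hf hf2
    rw [sum_split hn f]
    have hrest : ∑ i ∈ Finset.univ \ {i0, i1}, f i = ((n:ℝ) - 2) * m := by
      rw [Finset.sum_congr rfl (fun i hi => ?_), Finset.sum_const, nsmul_eq_mul, hcard]
      rw [Finset.mem_sdiff, Finset.mem_insert, Finset.mem_singleton] at hi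
      exact hf i (fun h => hi.2 (Or.inl h)) (fun h => hi.2 (Or.inr h))
    rw [hrest, hf2, hm]
    field_simp
    ring
  have hPsum : ∑ i, P i = 1 := by
    apply hsum
    · intro i h0 h1; simp [hP, h0, h1]
    · simp [hP, hi01, Ne.symm hi01]; ring
  have hQsum : ∑ i, Q i = 1 := by
    apply hsum
    · intro i _ _; rfl
    · show m + m = 2*m; ring
  have hRsum : ∑ i, R i = 1 := by
    apply hsum
    · intro i h0 h1; simp [hR, h0, h1]
    · simp [hR, hi01, Ne.symm hi01]; ring
  -- values of P, Q, R at i0, i1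
  have hPi0 : P i0 = m*(1-δ) := by simp [hP]
  have hPi1 : P i1 = m*(1+δ) := by simp [hP, Ne.symm hi01]
  have hRi0 : R i0 = m*(1+δ) := by simp [hR]
  have hRi1 : R i1 = m*(1-δ) := by simp [hR, Ne.symm hi01]
  have hQi : ∀ i, Q i = m := fun _ => rfl
  set L : ℝ := Real.log 2 with hLdef
  have hL : 0 < L := Real.log_pos one_lt_two
  -- generic jsd evaluation
  have hjsd : ∀ U V : Fin n → ℝ, (∀ i, 0 < U i) → (∀ i, 0 < V i) →
      (∀ i, i ≠ i0 → i ≠ i1 → U i = V i) →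
      jsd U V = ((U i0 + V i0)/4 * gfun ((U i0 - V i0)/(U i0 + V i0))
        + (U i1 + V i1)/4 * gfun ((U i1 - V i1)/(U i1 + V i1))) / L := by
    intro U V hU hV hUV
    unfold jsd
    rw [sum_split hn _]
    have hrest : ∑ i ∈ Finset.univ \ {i0, i1},
        (-(U i / 2) * Real.logb 2 ((U i + V i) / (2 * U i))
          - (V i / 2) * Real.logb 2 ((U i + V i) / (2 * V i))) = 0 := by
      apply Finset.sum_eq_zero
      intro i hi
      rw [Finset.mem_sdiff, Finset.mem_insert, Finset.mem_singleton] at hi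
      have hUVi : U i = V i := hUV i (fun h => hi.2 (Or.inl h)) (fun h => hi.2 (Or.inr h))
      rw [hUVi, show (V i + V i) / (2 * V i) = 1 by
        field_simp [(hV i).ne']
        ring]
      simp
    rw [hrest, term_eq _ _ (hU i0) (hV i0), term_eq _ _ (hU i1) (hV i1)]
    rw [zero_add, ← add_div]
  -- ratio simplifications
  have hm' : m ≠ 0 := hmpos.ne'
  set Av : ℝ := m * gfun δ with hAvdef
  set Bv : ℝ := m*(2-δ)/4 * gfun (δ/(2-δ)) + m*(2+δ)/4 * gfun (δ/(2+δ)) with hBvdef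
  have hAval : jsd P R = Av / L := by
    rw [hjsd P R hPpos hRpos (fun i h0 h1 => by simp [hP, hR, h0, h1]),
      hPi0, hPi1, hRi0, hRi1]
    rw [show m*(1-δ) - m*(1+δ) = m * (-2*δ) by ring,
      show m*(1-δ) + m*(1+δ) = m * 2 by ring,
      show m*(1+δ) - m*(1-δ) = m * (2*δ) by ring,
      show m*(1+δ) + m*(1-δ) = m * 2 by ring,
      mul_div_mul_left _ _ hm', mul_div_mul_left _ _ hm',
      show (-2*δ)/2 = -δ by ring, show (2*δ)/2 = δ by ring, gfun_neg]
    try rw [hAvdef]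
    try ring_nf
  have hBval : jsd P Q = Bv / L := by
    rw [hjsd P Q hPpos hQpos (fun i h0 h1 => by simp [hP, hQ, h0, h1]),
      hPi0, hPi1]
    rw [show m*(1-δ) - m = m * (-δ) by ring,
      show m*(1-δ) + m = m * (2-δ) by ring,
      show m*(1+δ) - m = m * δ by ring,
      show m*(1+δ) + m = m * (2+δ) by ring,
      mul_div_mul_left _ _ hm', mul_div_mul_left _ _ hm',
      show (-δ)/(2-δ) = -(δ/(2-δ)) by ring, gfun_neg]
    try rw [hBvdef]
    try ring_nf
  have hB'val : jsd Q R = Bv / L := by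
    rw [hjsd Q R hQpos hRpos (fun i h0 h1 => by simp [hQ, hR, h0, h1]),
      hRi0, hRi1]
    rw [show m - m*(1+δ) = m * (-δ) by ring,
      show m + m*(1+δ) = m * (2+δ) by ring,
      show m - m*(1-δ) = m * δ by ring,
      show m + m*(1-δ) = m * (2-δ) by ring,
      mul_div_mul_left _ _ hm', mul_div_mul_left _ _ hm',
      show (-δ)/(2+δ) = -(δ/(2+δ)) by ring, gfun_neg]
    try rw [hBvdef]
    try ring_nf
  -- bounds
  have d1 : (0:ℝ) < 2 - δ := by linarith
  have d2 : (0:ℝ) < 2 + δ := by linarith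
  have hx1b : δ/(2-δ) ≤ 1/24 := by
    rw [div_le_iff₀ d1]; linarith only [hδ24, hδpos]
  have hx2b : δ/(2+δ) ≤ 1/24 := by
    rw [div_le_iff₀ d2]; linarith only [hδ24, hδpos]
  have hx1n : 0 ≤ δ/(2-δ) := div_nonneg hδpos.le d1.le
  have hx2n : 0 ≤ δ/(2+δ) := div_nonneg hδpos.le d2.le
  obtain ⟨g0l, g0u⟩ := gfun_bounds δ hδpos.le hδ24
  obtain ⟨g1l, g1u⟩ := gfun_bounds _ hx1n hx1b
  obtain ⟨g2l, g2u⟩ := gfun_bounds _ hx2n hx2b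
  have hAvpos : 0 < Av := by
    rw [hAvdef]
    exact mul_pos hmpos (lt_of_lt_of_le (pow_pos hδpos 2) g0l)
  have hBvnn : 0 ≤ Bv := by
    rw [hBvdef]
    have := le_trans (pow_nonneg hx1n 2) g1l
    have := le_trans (pow_nonneg hx2n 2) g2l
    positivity
  -- the key numeric inequality
  have hstuff : (2-δ)/4 * ((δ/(2-δ))^2 + (δ/(2-δ))^4)
      + (2+δ)/4 * ((δ/(2+δ))^2 + (δ/(2+δ))^4) < c * δ^2 :=
    key_ineq δ t c hδpos hδ24 hδt htpos (by rw [ht]; ring)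
  have hBA : Bv < c * Av := by
    have step1 : Bv ≤ m * ((2-δ)/4 * ((δ/(2-δ))^2 + (δ/(2-δ))^4)
        + (2+δ)/4 * ((δ/(2+δ))^2 + (δ/(2+δ))^4)) := by
      rw [hBvdef]
      have t1 : m*(2-δ)/4 * gfun (δ/(2-δ)) ≤ m*(2-δ)/4 * ((δ/(2-δ))^2 + (δ/(2-δ))^4) :=
        mul_le_mul_of_nonneg_left g1u (by positivity)
      have t2 : m*(2+δ)/4 * gfun (δ/(2+δ)) ≤ m*(2+δ)/4 * ((δ/(2+δ))^2 + (δ/(2+δ))^4) :=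
        mul_le_mul_of_nonneg_left g2u (by positivity)
      linarith only [t1, t2]
    have step2 : m * ((2-δ)/4 * ((δ/(2-δ))^2 + (δ/(2-δ))^4)
        + (2+δ)/4 * ((δ/(2+δ))^2 + (δ/(2+δ))^4)) < m * (c * δ^2) :=
      mul_lt_mul_of_pos_left hstuff hmpos
    have step3 : m * (c * δ^2) ≤ c * Av := by
      rw [hAvdef, show m*(c*δ^2) = c*(m*δ^2) by ring]
      exact mul_le_mul_of_nonneg_left (mul_le_mul_of_nonneg_left g0l hmpos.le) hcpos.le
    exact lt_of_le_of_lt step1 (lt_of_lt_of_le step2 step3)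
  -- final assembly
  refine ⟨P, Q, R, hPpos, hPsum, hQpos, hQsum, hRpos, hRsum, ?_⟩
  rw [hAval, hBval, hB'val]
  have h1 : Bv / L < c * (Av / L) := by
    have h0 := (div_lt_div_iff_of_pos_right hL).mpr hBA
    rwa [mul_div_assoc] at h0
  have h2 : (Bv/L)^α < (c * (Av/L))^α :=
    Real.rpow_lt_rpow (div_nonneg hBvnn hL.le) h1 hα0
  rw [Real.mul_rpow hcpos.le (by positivity), hcα] at h2
  have h3 : 0 < (Av/L)^α := Real.rpow_pos_of_pos (by positivity) α
  linarith
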